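/- Let k be an algebraically closed field of characteristic 0 and let φ₄, φ₆, ψ ∈ k[x₁,x₂,x₃] with ψ nonconstant, ψ dividing φ₄ and ψ² dividing φ₆. Then every point (a₁,a₂,a₃,0,0) ∈ k⁵ with ψ(a₁,a₂,a₃) = 0 is a singular point of the associated sextic f = z² + y³ + y·φ₄ + φ₆, and consequently the set of singular points of f is infinite (so the singularities of the corresponding double Veronese cone are not isolated). -/

import Mathlib

open MvPolynomial

/-- The associated sextic `f = z² + y³ + y·φ₄ + φ₆` in `k[x₁,x₂,x₃,y,z]`,
with variables indexed by `Fin 5` (x₁,x₂,x₃ = X 0, X 1, X 2; y = X 3; z = X 4). -/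
noncomputable def sextic {k : Type*} [CommRing k] (φ₄ φ₆ : MvPolynomial (Fin 3) k) :
    MvPolynomial (Fin 5) k :=
  X 4 ^ 2 + X 3 ^ 3 + X 3 * rename (Fin.castLE (by norm_num)) φ₄ +
    rename (Fin.castLE (by norm_num)) φ₆

/-- `P` is a singular point of `f`: `f` and all its partial derivatives vanish at `P`. -/
def IsSingularPt {k : Type*} [CommRing k] (f : MvPolynomial (Fin 5) k) (P : Fin 5 → k) : Prop :=
  eval P f = 0 ∧ ∀ i : Fin 5, eval P (pderiv i f) = 0

private lemma exists_pos_degreeOf {k : Type*} [Field k] (ψ : MvPolynomial (Fin 3) k) (hψ : ∀ c : k, ψ ≠ C c) :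
    ∃ i, 0 < degreeOf i ψ := by
  by_contra h
  push_neg at h
  apply hψ (coeff 0 ψ)
  ext m
  rcases eq_or_ne m 0 with rfl | hm
  · simp
  · rw [coeff_C, if_neg (Ne.symm hm)]
    by_contra hc
    have hms : m ∈ ψ.support := mem_support_iff.mpr hc
    obtain ⟨i, hi⟩ : ∃ i, m i ≠ 0 := by
      by_contra h'
      push_neg at h'
      exact hm (Finsupp.ext h')
    have h2 : m i ≤ degreeOf i ψ := by
      rw [degreeOf_eq_sup]
      exact Finset.le_sup (f := fun m => m i) hms
    have := h i
    omega


private lemma nonvanish_infinite {k : Type*} [Field k] [Infinite k] (g : MvPolynomial (Fin 2) k) (hg : g ≠ 0) :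
    {b : Fin 2 → k | eval b g ≠ 0}.Infinite := by
  obtain ⟨b0, hb0⟩ : ∃ b : Fin 2 → k, eval b g ≠ 0 := by
    by_contra h
    push_neg at h
    exact hg (MvPolynomial.funext_iff.mpr (fun x => by simp [h x]))
  set F : Fin 2 → Polynomial k := fun i => if i = 0 then Polynomial.X else Polynomial.C (b0 i)
    with hF
  have key : ∀ (t : k) (h : MvPolynomial (Fin 2) k),
      Polynomial.eval t (aeval F h) = eval (Function.update b0 0 t) h := by
    intro t h
    induction h using MvPolynomial.induction_on with
    | C c => simp [hF]
    | add p q hp hq => simp [hp, hq]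
    | mul_X p i hp =>
        rcases eq_or_ne i 0 with rfl | hi
        · rw [map_mul, Polynomial.eval_mul, hp]
          simp [hF]
        · rw [map_mul, Polynomial.eval_mul, hp]
          simp [hF, Function.update_apply, hi]
  set p : Polynomial k := aeval F g with hpdef
  have hp : p ≠ 0 := by
    intro h0
    apply hb0
    have := key (b0 0) g
    rw [← hpdef, h0, Function.update_eq_self] at this
    simpa using this.symm
  have hT : {t : k | Polynomial.eval t p ≠ 0}.Infinite := by
    have : {t : k | Polynomial.eval t p ≠ 0} = {t : k | p.IsRoot t}ᶜ := by
      ext t; simp [Polynomial.IsRoot]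
    rw [this]
    exact (Polynomial.finite_setOf_isRoot hp).infinite_compl
  haveI := hT.to_subtype
  apply Set.infinite_of_injective_forall_mem
    (f := fun t : {t : k | Polynomial.eval t p ≠ 0} => Function.update b0 0 (t : k))
    (fun t1 t2 h12 => by simpa [Subtype.ext_iff] using congrFun h12 0)
    (fun t => by
      have := key t g
      rw [← hpdef] at this
      exact fun h => t.2 (by rw [this, h]))

private lemma zeros_infinite {k : Type*} [Field k] [IsAlgClosed k] [CharZero k]
    (ψ : MvPolynomial (Fin 3) k) (hψ : ∀ c : k, ψ ≠ C c) :
    {a : Fin 3 → k | eval a ψ = 0}.Infinite := by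
  obtain ⟨i0, hi0⟩ := exists_pos_degreeOf ψ hψ
  set σ : Fin 3 ≃ Fin 3 := Equiv.swap 0 i0 with hσ
  set ψ' : MvPolynomial (Fin 3) k := rename σ ψ with hψ'
  have hdeg : 0 < degreeOf 0 ψ' := by
    have := degreeOf_rename_of_injective (p := ψ) σ.injective i0
    rw [show σ i0 = 0 from Equiv.swap_apply_right 0 i0] at this
    rw [hψ', this]
    exact hi0
  have hne : ψ' ≠ 0 := by
    intro h0
    exact hψ 0 (by simpa [hψ', map_eq_zero_iff _ (rename_injective _ σ.injective)] using h0)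
  -- suffices to show zeros of ψ' infinite
  suffices h : {a : Fin 3 → k | eval a ψ' = 0}.Infinite by
    have himg : (fun a : Fin 3 → k => a ∘ σ) '' {a | eval a ψ' = 0} ⊆ {a | eval a ψ = 0} := by
      rintro _ ⟨a, ha, rfl⟩
      simpa [hψ', eval_rename] using ha
    refine Set.Infinite.mono himg (h.image ?_)
    intro a _ b _ hab
    funext j
    have := congrFun hab (σ.symm j)
    simpa using this
  set q : Polynomial (MvPolynomial (Fin 2) k) := finSuccEquiv k 2 ψ' with hq
  have hqne : q ≠ 0 := by
    simpa [hq] using (map_eq_zero_iff _ (finSuccEquiv k 2).injective).not.mpr hne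
  have hqdeg : q.natDegree = degreeOf 0 ψ' := natDegree_finSuccEquiv ψ'
  set g : MvPolynomial (Fin 2) k := q.leadingCoeff with hg
  have hgne : g ≠ 0 := by simpa [hg] using Polynomial.leadingCoeff_ne_zero.mpr hqne
  have hS := nonvanish_infinite g hgne
  haveI := hS.to_subtype
  have hroot : ∀ b : Fin 2 → k, eval b g ≠ 0 → ∃ y : k, eval (Fin.cons y b) ψ' = 0 := by
    intro b hb
    set qb : Polynomial k := q.map (eval b) with hqb
    have hcoeff : qb.coeff q.natDegree ≠ 0 := by
      rw [hqb, coeff_eval_eq_eval_coeff]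
      exact hb
    have hdegne : qb.degree ≠ 0 := by
      intro h0
      have h1 := Polynomial.le_natDegree_of_ne_zero hcoeff
      have h2 : qb.natDegree = 0 :=
        Polynomial.natDegree_le_iff_degree_le.mpr (le_of_eq h0) |> Nat.le_zero.mp
      rw [hqdeg] at h1
      omega
    obtain ⟨y, hy⟩ := IsAlgClosed.exists_root qb hdegne
    exact ⟨y, by rw [eval_eq_eval_mv_eval', ← hq, ← hqb, hy]⟩
  choose y hy using hroot
  apply Set.infinite_of_injective_forall_mem
    (f := fun b : {b : Fin 2 → k | eval b g ≠ 0} => Fin.cons (y b.1 b.2) (b : Fin 2 → k))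
    (fun b1 b2 h12 => by
      apply Subtype.ext
      funext j
      simpa using congrFun h12 j.succ)
    (fun b => hy b.1 b.2)

private lemma eval_rename_pt {k : Type*} [CommRing k] (a : Fin 3 → k) (φ : MvPolynomial (Fin 3) k) :
    eval ![a 0, a 1, a 2, 0, 0] (rename (Fin.castLE (show (3:ℕ) ≤ 5 by norm_num)) φ) = eval a φ := by
  have h : (![a 0, a 1, a 2, 0, 0] ∘ Fin.castLE (show (3:ℕ) ≤ 5 by norm_num)) = a := by
    funext j; fin_cases j <;> rfl
  rw [eval_rename, h]

private lemma pderiv_rename_high {k : Type*} [CommRing k] (i : Fin 5) (hi : ¬ (i : ℕ) < 3)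
    (φ : MvPolynomial (Fin 3) k) :
    pderiv i (rename (Fin.castLE (show (3:ℕ) ≤ 5 by norm_num)) φ) = 0 := by
  apply pderiv_eq_zero_of_notMem_vars
  intro hmem
  obtain ⟨j, _, hj⟩ := mem_vars_rename _ _ hmem
  apply hi
  rw [← hj]
  exact j.2

private lemma singular_pt {k : Type*} [Field k] (φ₄ φ₆ ψ : MvPolynomial (Fin 3) k)
    (hdvd4 : ψ ∣ φ₄) (hdvd6 : ψ ^ 2 ∣ φ₆) (a : Fin 3 → k) (ha : eval a ψ = 0) :
    IsSingularPt (sextic φ₄ φ₆) ![a 0, a 1, a 2, 0, 0] := by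
  obtain ⟨q4, h4⟩ := hdvd4
  obtain ⟨q6, h6⟩ := hdvd6
  rw [pow_two, mul_assoc] at h6
  have hP3 : (![a 0, a 1, a 2, 0, 0] : Fin 5 → k) 3 = 0 := rfl
  have hP4 : (![a 0, a 1, a 2, 0, 0] : Fin 5 → k) 4 = 0 := rfl
  constructor
  · simp [sextic, eval_rename_pt, Pi.single_apply, hP3, hP4, h6, ha]
  · intro i
    fin_cases i
    · rw [show (⟨0, by omega⟩ : Fin 5) = Fin.castLE (show (3:ℕ) ≤ 5 by norm_num) 0 from rfl]
      simp [sextic, pderiv_rename (Fin.castLE_injective _), pderiv_pow,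
        pderiv_X_of_ne (show Fin.castLE (show (3:ℕ) ≤ 5 by norm_num) 0 ≠ 4 by decide),
        pderiv_X_of_ne (show Fin.castLE (show (3:ℕ) ≤ 5 by norm_num) 0 ≠ 3 by decide),
        eval_rename_pt, Pi.single_apply, hP3, hP4, h6, ha]
    · rw [show (⟨1, by omega⟩ : Fin 5) = Fin.castLE (show (3:ℕ) ≤ 5 by norm_num) 1 from rfl]
      simp [sextic, pderiv_rename (Fin.castLE_injective _), pderiv_pow,
        pderiv_X_of_ne (show Fin.castLE (show (3:ℕ) ≤ 5 by norm_num) 1 ≠ 4 by decide),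
        pderiv_X_of_ne (show Fin.castLE (show (3:ℕ) ≤ 5 by norm_num) 1 ≠ 3 by decide),
        (show ¬((4:Fin 5) = Fin.castLE (show (3:ℕ) ≤ 5 by norm_num) 1) by decide),
        (show ¬((3:Fin 5) = Fin.castLE (show (3:ℕ) ≤ 5 by norm_num) 1) by decide),
        eval_rename_pt, Pi.single_apply, hP3, hP4, h6, ha]
    · rw [show (⟨2, by omega⟩ : Fin 5) = Fin.castLE (show (3:ℕ) ≤ 5 by norm_num) 2 from rfl]
      simp [sextic, pderiv_rename (Fin.castLE_injective _), pderiv_pow,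
        pderiv_X_of_ne (show Fin.castLE (show (3:ℕ) ≤ 5 by norm_num) 2 ≠ 4 by decide),
        pderiv_X_of_ne (show Fin.castLE (show (3:ℕ) ≤ 5 by norm_num) 2 ≠ 3 by decide),
        (show ¬((4:Fin 5) = Fin.castLE (show (3:ℕ) ≤ 5 by norm_num) 2) by decide),
        (show ¬((3:Fin 5) = Fin.castLE (show (3:ℕ) ≤ 5 by norm_num) 2) by decide),
        eval_rename_pt, Pi.single_apply, hP3, hP4, h6, ha]
    · -- i = 3
      simp [sextic, pderiv_rename_high 3 (by decide), pderiv_pow,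
        pderiv_X_of_ne (show (3:Fin 5) ≠ 4 by decide), pderiv_X_self,
        eval_rename_pt, hP3, hP4, h4, ha]
    · -- i = 4
      simp [sextic, pderiv_rename_high 4 (by decide), pderiv_pow,
        pderiv_X_of_ne (show (4:Fin 5) ≠ 3 by decide), pderiv_X_self,
        hP3, hP4]

/-- If `ψ` is nonconstant, `ψ ∣ φ₄` and `ψ² ∣ φ₆`, then every point `(a₁,a₂,a₃,0,0)`
with `ψ(a) = 0` is singular on the sextic, and the set of singular points is infinite. -/
theorem stmt_0 {k : Type*} [Field k] [IsAlgClosed k] [CharZero k]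
    (φ₄ φ₆ ψ : MvPolynomial (Fin 3) k)
    (hψ : ∀ c : k, ψ ≠ C c)
    (hdvd4 : ψ ∣ φ₄) (hdvd6 : ψ ^ 2 ∣ φ₆) :
    (∀ a : Fin 3 → k, eval a ψ = 0 →
      IsSingularPt (sextic φ₄ φ₆) ![a 0, a 1, a 2, 0, 0]) ∧
    {P : Fin 5 → k | IsSingularPt (sextic φ₄ φ₆) P}.Infinite := by
  have hzeros := zeros_infinite ψ hψ
  have hsing : ∀ a : Fin 3 → k, eval a ψ = 0 →
      IsSingularPt (sextic φ₄ φ₆) ![a 0, a 1, a 2, 0, 0] :=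
    fun a ha => singular_pt φ₄ φ₆ ψ hdvd4 hdvd6 a ha
  refine ⟨hsing, ?_⟩
  have himg : (fun a : Fin 3 → k => ![a 0, a 1, a 2, 0, 0]) '' {a | eval a ψ = 0}
      ⊆ {P : Fin 5 → k | IsSingularPt (sextic φ₄ φ₆) P} := by
    rintro _ ⟨a, ha, rfl⟩
    exact hsing a ha
  refine Set.Infinite.mono himg (hzeros.image ?_)
  intro a _ b _ hab
  funext j
  fin_cases j
  · exact congrFun hab 0
  · exact congrFun hab 1
  · exact congrFun hab 2
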